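/- For every labeled multi-relational graph G and every t ≥ 0: if C_R^(t)(v) = C_R^(t)(w) for vertices v, w, then C_WR^(t)(v) = C_WR^(t)(w). That is, the weak multi-relational 1-WL is coarser than (refined by) the strong multi-relational 1-WL at every iteration. -/

import Mathlib

/-- Strong multi-relational 1-WL message: multiset of `(color of u, relation i)`. -/
def rwlMsg {V : Type*} {r : ℕ} (N : Fin r → V → Finset V)
    (c : V → ℕ) (v : V) : Multiset (ℕ × ℕ) :=
  ∑ i : Fin r, (N i v).val.map (fun u => (c u, (i : ℕ)))

/-- Weak multi-relational 1-WL message: multiset of neighbor colors over all relations. -/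
def wrwlMsg {V : Type*} {r : ℕ} (N : Fin r → V → Finset V)
    (c : V → ℕ) (v : V) : Multiset ℕ :=
  ∑ i : Fin r, (N i v).val.map c

/-- at every iteration, the weak multi-relational 1-WL coloring is
coarser than (refined by) the strong multi-relational 1-WL coloring. -/
lemma multiset_map_finsum {ι α β : Type*} (g : α → β) (s : Finset ι)
    (m : ι → Multiset α) :
    (∑ i ∈ s, m i).map g = ∑ i ∈ s, (m i).map g := by
  classical
  induction s using Finset.induction_on with
  | empty => simp
  | insert _ _ h ih => simp [Finset.sum_insert h, ih]

theorem weak_coarser_than_strong {V : Type*} [Fintype V] {r : ℕ}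
    (N : Fin r → V → Finset V) (ℓ : V → ℕ) (CR CWR : ℕ → V → ℕ)
    (hR0 : ∀ v w, CR 0 v = CR 0 w ↔ ℓ v = ℓ w)
    (hR : ∀ t v w, CR (t + 1) v = CR (t + 1) w ↔
      (CR t v = CR t w ∧ rwlMsg N (CR t) v = rwlMsg N (CR t) w))
    (hW0 : ∀ v w, CWR 0 v = CWR 0 w ↔ ℓ v = ℓ w)
    (hW : ∀ t v w, CWR (t + 1) v = CWR (t + 1) w ↔
      (CWR t v = CWR t w ∧ wrwlMsg N (CWR t) v = wrwlMsg N (CWR t) w ∧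
        ∀ i, (N i v).card = (N i w).card)) :
    ∀ t (v w : V), CR t v = CR t w → CWR t v = CWR t w := by
  intro t
  induction t with
  | zero => intro v w h; exact (hW0 v w).2 ((hR0 v w).1 h)
  | succ t ih =>
    intro v w h
    obtain ⟨h1, h2⟩ := (hR t v w).1 h
    classical
    have hf : ∀ u, (fun c => if hc : ∃ u', CR t u' = c then CWR t hc.choose else 0)
        (CR t u) = CWR t u := by
      intro u
      have hex : ∃ u', CR t u' = CR t u := ⟨u, rfl⟩
      simp only [dif_pos hex]
      exact ih _ _ hex.choose_spec
    set f : ℕ → ℕ := fun c => if hc : ∃ u', CR t u' = c then CWR t hc.choose else 0 with hfdef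
    have key : ∀ x, wrwlMsg N (CWR t) x = (rwlMsg N (CR t) x).map (fun p => f p.1) := by
      intro x
      rw [wrwlMsg, rwlMsg, multiset_map_finsum]
      refine Finset.sum_congr rfl fun i _ => ?_
      rw [Multiset.map_map]
      exact Multiset.map_congr rfl fun u _ => (hf u).symm
    have cardkey : ∀ x (i : Fin r),
        (N i x).card = ((rwlMsg N (CR t) x).map Prod.snd).count (i : ℕ) := by
      intro x i
      rw [rwlMsg, multiset_map_finsum, Multiset.count_sum']
      have hterm : ∀ j : Fin r,
          Multiset.count (i : ℕ) (((N j x).val.map (fun u => (CR t u, (j : ℕ)))).map Prod.snd)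
            = if j = i then (N j x).card else 0 := by
        intro j
        rw [Multiset.map_map]
        show Multiset.count (i : ℕ) ((N j x).val.map (fun _ => (j : ℕ))) = _
        rw [Multiset.map_const', Multiset.count_replicate]
        simp only [Fin.val_inj]
        rcases eq_or_ne j i with rfl | hne
        · rfl
        · simp [hne]
      rw [Finset.sum_congr rfl fun j _ => hterm j]
      simp
    refine (hW t v w).2 ⟨ih v w h1, ?_, ?_⟩
    · rw [key v, key w, h2]
    · intro i
      rw [cardkey v i, cardkey w i, h2]
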